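/- If an n-uniform hypergraph H is 2-colorable, then there exists a linear order on its vertices such that the greedy coloring with respect to that order produces a proper 2-coloring (no monochromatic edge). -/

import Mathlib

/-- Greedy coloring of the hypergraph `E` with respect to the linear order `L`:
all vertices start red; scanning vertices in increasing order, a vertex is
recolored blue iff it is the maximal vertex of some edge all of whose other
(hence earlier) vertices are currently red. `greedyBlue L E x` states that `x`
ends up blue. -/
def greedyBlue {V : Type} [Fintype V] (L : LinearOrder V)
    (E : Finset (Finset V)) : V → Prop :=
  letI := L
  WellFounded.fix
    (Finite.wellFounded_of_trans_of_irrefl (· < · : V → V → Prop))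
    (fun v ih => ∃ e ∈ E, v ∈ e ∧ (∀ w ∈ e, w ≤ v) ∧
      ∀ w ∈ e, (h : w < v) → ¬ ih w h)

theorem greedyBlue_iff {V : Type} [Fintype V] (L : LinearOrder V)
    (E : Finset (Finset V)) (v : V) :
    greedyBlue L E v ↔ (letI := L; ∃ e ∈ E, v ∈ e ∧ (∀ w ∈ e, w ≤ v) ∧
      ∀ w ∈ e, w < v → ¬ greedyBlue L E w) := by
  letI := L
  unfold greedyBlue
  rw [WellFounded.fix_eq]

/-- If an `n`-uniform hypergraph is 2-colorable, then there is a linear order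
on its vertices for which the greedy coloring is a proper 2-coloring. -/
theorem greedy_succeeds_of_colorable (n : ℕ) (V : Type) [Fintype V]
    (E : Finset (Finset V)) (hunif : ∀ e ∈ E, e.card = n)
    (hB : ∃ c : V → Bool, ∀ e ∈ E, (∃ x ∈ e, c x = true) ∧ (∃ x ∈ e, c x = false)) :
    ∃ L : LinearOrder V, ∀ e ∈ E,
      (∃ x ∈ e, greedyBlue L E x) ∧ (∃ x ∈ e, ¬ greedyBlue L E x) := by
  classical
  obtain ⟨c, hc⟩ := hB
  let eq := Fintype.equivFin V
  let f : V → Bool ×ₗ (Fin (Fintype.card V)) := fun v => toLex (c v, eq v)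
  have hf : Function.Injective f := by
    intro a b h
    have h2 := congrArg (fun p => (ofLex p).2) h
    simpa using eq.injective h2
  letI L : LinearOrder V := LinearOrder.lift' f hf
  have hlt : ∀ a b : V, a < b ↔ f a < f b := fun a b => Iff.rfl
  -- if c v = false and c x = true then v < x
  have horder : ∀ v x : V, c v = false → c x = true → v < x := by
    intro v x hv hx
    rw [hlt]
    exact (Prod.Lex.lt_iff).mpr (Or.inl (by simp [f, hv, hx]))
  -- every greedy-blue vertex is true-colored
  have hblue : ∀ v : V, greedyBlue L E v → c v = true := by
    intro v hv
    obtain ⟨e, he, hve, hmax, -⟩ := (greedyBlue_iff L E v).mp hv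
    by_contra hfalse
    have hvf : c v = false := by
      cases hcv : c v with
      | false => rfl
      | true => exact absurd hcv hfalse
    obtain ⟨x, hxe, hxt⟩ := (hc e he).1
    exact absurd (hmax x hxe) (not_le.mpr (horder v x hvf hxt))
  refine ⟨L, fun e he => ?_⟩
  constructor
  · -- some blue vertex
    by_contra hnone
    push_neg at hnone
    obtain ⟨x, hxe, -⟩ := (hc e he).1
    have hne : e.Nonempty := ⟨x, hxe⟩
    have : greedyBlue L E (e.max' hne) := by
      rw [greedyBlue_iff]
      exact ⟨e, he, e.max'_mem hne, fun w hw => e.le_max' w hw,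
        fun w hw _ => hnone w hw⟩
    exact hnone _ (e.max'_mem hne) this
  · obtain ⟨x, hxe, hxf⟩ := (hc e he).2
    refine ⟨x, hxe, fun hb => ?_⟩
    rw [hblue x hb] at hxf
    exact Bool.noConfusion hxf
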